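/- arXiv:2307.02180 — 2 statements merged into one kernel-verified Lean document; each statement's English description precedes it below -/
import Mathlib

section
/- Let T_b, T_c, T_d : ℕ → ℝ≥0 be polylog-polynomial, i.e., T_b(n) = Θ(n^{j₁} (log n)^{k₁}) and T_c(n)+T_d(n) = Θ(n^{j₂} (log n)^{k₂}). Define T_r by T_r(n) = T_b(n) + T_r(n-1) and T_u by T_u(n) = T_c(n) + T_d(n) + T_u(⌊n/2⌋) (with bounded base cases). If T_c(n)+T_d(n) = Θ(T_b(n)), then T_u(n) = o(T_r(n)). -/
open Filter Asymptotics

private lemma F_nonneg' (j k n : ℕ) : 0 ≤ (n : ℝ) ^ j * (Real.log n) ^ k := by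
  refine mul_nonneg (pow_nonneg (Nat.cast_nonneg n) _) (pow_nonneg ?_ _)
  rcases Nat.eq_zero_or_pos n with h | h
  · simp [h]
  · exact Real.log_nonneg (by exact_mod_cast h)

private lemma F_mono' (j k : ℕ) {a b : ℕ} (ha : 1 ≤ a) (hab : a ≤ b) :
    (a : ℝ) ^ j * (Real.log a) ^ k ≤ (b : ℝ) ^ j * (Real.log b) ^ k := by
  have h1 : (1:ℝ) ≤ (a:ℝ) := by exact_mod_cast ha
  have hcast : (a:ℝ) ≤ (b:ℝ) := by exact_mod_cast hab
  have hla : 0 ≤ Real.log a := Real.log_nonneg h1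
  exact mul_le_mul (pow_le_pow_left₀ (by positivity) hcast _)
    (pow_le_pow_left₀ hla (Real.log_le_log (by linarith) hcast) _)
    (pow_nonneg hla _) (pow_nonneg (by positivity) _)

set_option maxHeartbeats 1000000 in
/-- Sufficient condition for super-linear speedup: if the combined
recursive step of unfolder and meta-interpreter has the same asymptotic
complexity as a recursive step of the original rule, then the unfolded
recursion T_u is asymptotically strictly faster than the original
recursion T_r. -/
theorem superlinear_speedup_sufficient (j₁ k₁ j₂ k₂ : ℕ)
    (Tb Tc Td Tr Tu : ℕ → NNReal)
    (hTb : (fun n : ℕ => (Tb n : ℝ)) =Θ[atTop]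
      fun n : ℕ => (n : ℝ) ^ j₁ * (Real.log n) ^ k₁)
    (hTcd : (fun n : ℕ => ((Tc n : ℝ) + (Td n : ℝ))) =Θ[atTop]
      fun n : ℕ => (n : ℝ) ^ j₂ * (Real.log n) ^ k₂)
    (hTr : ∀ n, 2 ≤ n → Tr n = Tb n + Tr (n - 1))
    (hTu : ∀ n, 2 ≤ n → Tu n = Tc n + Td n + Tu (n / 2))
    (hTrb : ∃ C, ∀ n, n < 2 → Tr n ≤ C)
    (hTub : ∃ C, ∀ n, n < 2 → Tu n ≤ C)
    (hcond : (fun n : ℕ => ((Tc n : ℝ) + (Td n : ℝ))) =Θ[atTop]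
      fun n : ℕ => (Tb n : ℝ)) :
    (fun n : ℕ => (Tu n : ℝ)) =o[atTop] fun n : ℕ => (Tr n : ℝ) := by
  set F : ℕ → ℝ := fun n : ℕ => (n : ℝ) ^ j₁ * (Real.log n) ^ k₁ with hFdef
  have hFnn : ∀ n : ℕ, 0 ≤ F n := fun n => F_nonneg' j₁ k₁ n
  have hFmono : ∀ {a b : ℕ}, 1 ≤ a → a ≤ b → F a ≤ F b := fun ha hab => F_mono' j₁ k₁ ha hab
  obtain ⟨C0, hC0⟩ := hTub
  -- Step 1: a pointwise upper bound for Tc + Td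
  have hTcdF : (fun n : ℕ => ((Tc n : ℝ) + (Td n : ℝ))) =Θ[atTop] F := hcond.trans hTb
  obtain ⟨C, hCpos, hC⟩ := hTcdF.isBigO.exists_pos
  rw [isBigOWith_iff, eventually_atTop] at hC
  obtain ⟨N, hN⟩ := hC
  set B : ℝ := ∑ m ∈ Finset.range N, ((Tc m : ℝ) + (Td m : ℝ)) with hBdef
  have hB0 : 0 ≤ B := Finset.sum_nonneg fun m _ => by positivity
  set D : ℝ := C + B with hDdef
  have hD0 : 0 ≤ D := by positivity
  have hDbound : ∀ n, (Tc n : ℝ) + (Td n : ℝ) ≤ D * (F n + 1) := by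
    intro n
    have hFn := hFnn n
    rcases le_or_gt N n with h | h
    · have h2 := hN n h
      rw [Real.norm_eq_abs, Real.norm_eq_abs, abs_of_nonneg (by positivity),
        abs_of_nonneg hFn] at h2
      nlinarith
    · have h2 : (Tc n : ℝ) + (Td n : ℝ) ≤ B :=
        Finset.single_le_sum (f := fun m => ((Tc m : ℝ) + (Td m : ℝ)))
          (fun m _ => by positivity) (Finset.mem_range.mpr h)
      nlinarith
  -- Step 2: Tu n ≤ C0 + (log₂ n + 1) * (D * (F n + 1))
  have hTuBound : ∀ n : ℕ, (Tu n : ℝ) ≤ (C0 : ℝ) + ((Nat.log 2 n : ℝ) + 1) * (D * (F n + 1)) := by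
    intro n
    induction n using Nat.strong_induction_on with
    | _ n ih =>
      rcases lt_or_ge n 2 with h | h
      · have h1 : (Tu n : ℝ) ≤ (C0 : ℝ) := by exact_mod_cast hC0 n h
        have h2 : 0 ≤ ((Nat.log 2 n : ℝ) + 1) * (D * (F n + 1)) := by
          have := hFnn n; positivity
        linarith
      · have hdiv : n / 2 < n := Nat.div_lt_self (by omega) (by omega)
        have ihh := ih (n / 2) hdiv
        have hlog : Nat.log 2 (n / 2) + 1 = Nat.log 2 n := by
          rw [Nat.log_div_base]
          have h1 : 1 ≤ Nat.log 2 n := Nat.le_log_of_pow_le (by omega) (by omega)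
          omega
        have hlogR : (Nat.log 2 (n / 2) : ℝ) + 1 = (Nat.log 2 n : ℝ) := by exact_mod_cast hlog
        have hFm : F (n / 2) ≤ F n := hFmono (by omega) (Nat.div_le_self n 2)
        have hcast : (Tu n : ℝ) = ((Tc n : ℝ) + (Td n : ℝ)) + (Tu (n / 2) : ℝ) := by
          rw [hTu n h]; push_cast; ring
        have h1 := hDbound n
        have hFn0 := hFnn n
        have hlognn : (0:ℝ) ≤ (Nat.log 2 n : ℝ) := Nat.cast_nonneg _
        have hkey : ((Nat.log 2 (n/2) : ℝ) + 1) * (D * (F (n/2) + 1)) ≤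
            (Nat.log 2 n : ℝ) * (D * (F n + 1)) := by
          rw [hlogR]
          exact mul_le_mul_of_nonneg_left
            (mul_le_mul_of_nonneg_left (by linarith) hD0) hlognn
        rw [hcast]
        nlinarith [hFnn (n/2)]
  -- Step 3: Tu = O(log n * F n)
  have hTuO : (fun n : ℕ => (Tu n : ℝ)) =O[atTop] fun n : ℕ => Real.log n * F n := by
    rw [isBigO_iff]
    refine ⟨(C0 : ℝ) + 6 * D, ?_⟩
    filter_upwards [eventually_ge_atTop 3] with n hn
    have hn0 : (0:ℝ) < (n:ℝ) := by
      have : (3:ℝ) ≤ (n:ℝ) := by exact_mod_cast hn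
      linarith
    have hn3 : (3:ℝ) ≤ (n:ℝ) := by exact_mod_cast hn
    have hlog1 : (1:ℝ) ≤ Real.log n := by
      rw [Real.le_log_iff_exp_le hn0]
      have := Real.exp_one_lt_d9
      linarith
    have hF1 : (1:ℝ) ≤ F n := by
      have h1 : (1:ℝ) ≤ (n:ℝ) ^ j₁ := one_le_pow₀ (by linarith)
      have h2 : (1:ℝ) ≤ (Real.log n) ^ k₁ := one_le_pow₀ hlog1
      calc (1:ℝ) = 1 * 1 := by ring
      _ ≤ (n:ℝ) ^ j₁ * (Real.log n) ^ k₁ := mul_le_mul h1 h2 zero_le_one (by linarith)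
    have hlog2 : (Nat.log 2 n : ℝ) ≤ 2 * Real.log n := by
      have h1 : (2:ℕ) ^ Nat.log 2 n ≤ n := Nat.pow_log_le_self 2 (by omega)
      have h2 : ((2:ℝ)) ^ Nat.log 2 n ≤ (n:ℝ) := by exact_mod_cast h1
      have h3 : Real.log ((2:ℝ) ^ Nat.log 2 n) ≤ Real.log n :=
        Real.log_le_log (by positivity) h2
      rw [Real.log_pow] at h3
      have h4 := Real.log_two_gt_d9
      have h5 : (0:ℝ) ≤ (Nat.log 2 n : ℝ) := Nat.cast_nonneg _
      nlinarith
    have hmain := hTuBound n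
    have hFn0 := hFnn n
    have hTu0 : (0:ℝ) ≤ (Tu n : ℝ) := NNReal.coe_nonneg _
    have hC00 : (0:ℝ) ≤ (C0 : ℝ) := NNReal.coe_nonneg _
    rw [Real.norm_eq_abs, Real.norm_eq_abs, abs_of_nonneg hTu0,
      abs_of_nonneg (by nlinarith : (0:ℝ) ≤ Real.log n * F n)]
    have hstep : ((Nat.log 2 n : ℝ) + 1) * (D * (F n + 1)) ≤
        (3 * Real.log n) * (D * (2 * F n)) := by
      apply mul_le_mul (by linarith) (mul_le_mul_of_nonneg_left (by linarith) hD0)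
        (by nlinarith) (by nlinarith)
    have hLF : (1:ℝ) ≤ Real.log n * F n := by nlinarith
    have hC0step : (C0 : ℝ) ≤ (C0 : ℝ) * (Real.log n * F n) := by nlinarith
    calc (Tu n : ℝ) ≤ (C0 : ℝ) + ((Nat.log 2 n : ℝ) + 1) * (D * (F n + 1)) := hmain
    _ ≤ (C0 : ℝ) * (Real.log n * F n) + (3 * Real.log n) * (D * (2 * F n)) := by linarith
    _ = ((C0 : ℝ) + 6 * D) * (Real.log n * F n) := by ring
  -- Step 4: telescoping lower bound for Tr
  have hTrSum : ∀ n : ℕ, ∀ a : ℕ, 2 ≤ a → (∑ m ∈ Finset.Icc a n, (Tb m : ℝ)) ≤ (Tr n : ℝ) := by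
    intro n
    induction n with
    | zero =>
      intro a ha
      rw [Finset.Icc_eq_empty (by omega)]
      simp
    | succ n ih =>
      intro a ha
      rcases le_or_gt a (n + 1) with h | h
      · rw [Finset.sum_Icc_succ_top h]
        have h2 : (Tr (n + 1) : ℝ) = (Tb (n + 1) : ℝ) + (Tr n : ℝ) := by
          have := hTr (n + 1) (by omega)
          rw [Nat.add_sub_cancel] at this
          rw [this]; push_cast; ring
        have hs := ih a ha
        rw [h2]; linarith
      · rw [Finset.Icc_eq_empty (by omega)]
        simp [NNReal.coe_nonneg]
  obtain ⟨C₂, hC₂pos, hC₂⟩ := hTb.symm.isBigO.exists_pos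
  rw [isBigOWith_iff, eventually_atTop] at hC₂
  obtain ⟨N₁, hN₁⟩ := hC₂
  set P : ℝ := 2 ^ (j₁ + k₁) with hPdef
  have hP0 : (0:ℝ) < P := by positivity
  have hTrLower : (fun n : ℕ => (n:ℝ) * F n) =O[atTop] fun n : ℕ => (Tr n : ℝ) := by
    rw [isBigO_iff]
    refine ⟨2 * P * C₂, ?_⟩
    filter_upwards [eventually_ge_atTop (max 4 (2 * N₁))] with n hn
    rw [max_le_iff] at hn
    obtain ⟨hn4, hnN⟩ := hn
    set m₀ : ℕ := n / 2 + 1 with hm₀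
    -- each term in Icc m₀ n dominates F m₀ / C₂
    have hterm : ∀ m ∈ Finset.Icc m₀ n, F m₀ ≤ C₂ * (Tb m : ℝ) := by
      intro m hm
      rw [Finset.mem_Icc] at hm
      have hmN : N₁ ≤ m := by omega
      have h2 := hN₁ m hmN
      rw [Real.norm_eq_abs, Real.norm_eq_abs, abs_of_nonneg (hFnn m),
        abs_of_nonneg (NNReal.coe_nonneg _)] at h2
      calc F m₀ ≤ F m := hFmono (by omega) hm.1
      _ ≤ C₂ * (Tb m : ℝ) := h2
    have hsum : ((Finset.Icc m₀ n).card : ℝ) * F m₀ ≤ C₂ * (Tr n : ℝ) := by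
      have h1 := Finset.card_nsmul_le_sum (Finset.Icc m₀ n) (fun m => C₂ * (Tb m : ℝ))
        (F m₀) hterm
      rw [nsmul_eq_mul, ← Finset.mul_sum] at h1
      have h2 := hTrSum n m₀ (by omega)
      nlinarith
    have hcard : (n:ℝ) ≤ 2 * ((Finset.Icc m₀ n).card : ℝ) := by
      rw [Nat.card_Icc]
      have : n ≤ 2 * (n + 1 - m₀) := by omega
      exact_mod_cast this
    -- F n ≤ P * F m₀
    have hm₀half : (n:ℝ) / 2 ≤ (m₀:ℝ) := by
      have h1 : n < 2 * m₀ := by omega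
      have h2 : (n:ℝ) < 2 * (m₀:ℝ) := by exact_mod_cast h1
      linarith
    have hm₀pos : (0:ℝ) < (n:ℝ) / 2 := by
      have : (4:ℝ) ≤ (n:ℝ) := by exact_mod_cast hn4
      linarith
    have hn4R : (4:ℝ) ≤ (n:ℝ) := by exact_mod_cast hn4
    have hlogm₀ : Real.log n / 2 ≤ Real.log m₀ := by
      have h1 : Real.log ((n:ℝ) / 2) ≤ Real.log m₀ := Real.log_le_log hm₀pos hm₀half
      rw [Real.log_div (by linarith) (by norm_num)] at h1
      have h2 : Real.log 4 ≤ Real.log n := Real.log_le_log (by norm_num) hn4R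
      have h3 : Real.log 4 = 2 * Real.log 2 := by
        rw [show (4:ℝ) = 2 ^ 2 by norm_num, Real.log_pow]; push_cast; ring
      linarith
    have hlogn0 : (0:ℝ) ≤ Real.log n := Real.log_nonneg (by linarith)
    have hFcomp : F n ≤ P * F m₀ := by
      have h1 : ((n:ℝ) / 2) ^ j₁ ≤ (m₀:ℝ) ^ j₁ := pow_le_pow_left₀ (by linarith) hm₀half _
      have h2 : (Real.log n / 2) ^ k₁ ≤ (Real.log m₀) ^ k₁ :=
        pow_le_pow_left₀ (by linarith) hlogm₀ _
      have h3 : ((n:ℝ) / 2) ^ j₁ * (Real.log n / 2) ^ k₁ ≤ F m₀ :=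
        mul_le_mul h1 h2 (pow_nonneg (by linarith) _) (pow_nonneg (by positivity) _)
      have h4 : ((n:ℝ) / 2) ^ j₁ * (Real.log n / 2) ^ k₁ = F n / P := by
        simp only [hFdef, hPdef]
        rw [div_pow, div_pow, div_mul_div_comm, ← pow_add]
      rw [h4] at h3
      rw [mul_comm]
      exact (div_le_iff₀ hP0).mp h3
    -- combine
    have hFn0 := hFnn n
    have hFm₀0 := hFnn m₀
    have hcard0 : (0:ℝ) ≤ ((Finset.Icc m₀ n).card : ℝ) := Nat.cast_nonneg _
    have hTr0 : (0:ℝ) ≤ (Tr n : ℝ) := NNReal.coe_nonneg _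
    rw [Real.norm_eq_abs, Real.norm_eq_abs, abs_of_nonneg (by positivity),
      abs_of_nonneg hTr0]
    calc (n:ℝ) * F n ≤ (2 * ((Finset.Icc m₀ n).card : ℝ)) * F n :=
        mul_le_mul_of_nonneg_right hcard hFn0
    _ ≤ (2 * ((Finset.Icc m₀ n).card : ℝ)) * (P * F m₀) :=
        mul_le_mul_of_nonneg_left hFcomp (by linarith)
    _ = 2 * P * (((Finset.Icc m₀ n).card : ℝ) * F m₀) := by ring
    _ ≤ 2 * P * (C₂ * (Tr n : ℝ)) := by nlinarith
    _ = 2 * P * C₂ * (Tr n : ℝ) := by ring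
  -- Step 5: conclude
  have hLog : (fun n : ℕ => Real.log n) =o[atTop] (fun n : ℕ => (n:ℝ)) :=
    Real.isLittleO_log_id_atTop.comp_tendsto tendsto_natCast_atTop_atTop
  have hmid : (fun n : ℕ => Real.log n * F n) =o[atTop] fun n : ℕ => (n:ℝ) * F n :=
    hLog.mul_isBigO (isBigO_refl F atTop)
  exact (hTuO.trans_isLittleO hmid).trans_isBigO hTrLower
end

section
/- Let T_b(n) = Θ(n^{j₁} (log n)^{k₁}) and T_c(n)+T_d(n) = Θ(n^{j₂} (log n)^{k₂}) for fixed nonnegative integers j₁,k₁,j₂,k₂, and define T_r(n) = T_b(n) + T_r(n-1), T_u(n) = T_c(n)+T_d(n) + T_u(⌊n/2⌋) with bounded base cases. Then T_u(n) = o(T_r(n)) if and only if T_c(n)+T_d(n) = o(n · T_b(n)). -/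
open Filter Asymptotics

private lemma sls_log_ge_one {n : ℕ} (hn : 3 ≤ n) : 1 ≤ Real.log n := by
  have h3 : (3:ℝ) ≤ (n:ℝ) := by exact_mod_cast hn
  have : (1:ℝ) ≤ Real.log 3 := by
    rw [Real.le_log_iff_exp_le (by norm_num)]
    exact (Real.exp_one_lt_d9.le.trans (by norm_num))
  exact this.trans (Real.log_le_log (by norm_num) h3)

private lemma sls_g_nonneg (j k n : ℕ) : 0 ≤ (n:ℝ) ^ j * Real.log n ^ k := by
  rcases Nat.eq_zero_or_pos n with h | h
  · subst h; simp only [Nat.cast_zero, Real.log_zero]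
    exact mul_nonneg (pow_nonneg le_rfl _) (pow_nonneg le_rfl _)
  · have h1 : (1:ℝ) ≤ (n:ℝ) := by exact_mod_cast h
    exact mul_nonneg (by positivity) (pow_nonneg (Real.log_nonneg h1) _)

private lemma sls_g_ge_one (j k : ℕ) {n : ℕ} (hn : 3 ≤ n) :
    1 ≤ (n:ℝ) ^ j * Real.log n ^ k := by
  have h1 : (1:ℝ) ≤ (n:ℝ) := by exact_mod_cast (by omega : 1 ≤ n)
  have hp : (1:ℝ) ≤ (n:ℝ) ^ j := by
    calc (1:ℝ) = 1 ^ j := (one_pow j).symm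
    _ ≤ (n:ℝ) ^ j := pow_le_pow_left₀ zero_le_one h1 j
  have hl : (1:ℝ) ≤ Real.log n ^ k := by
    calc (1:ℝ) = 1 ^ k := (one_pow k).symm
    _ ≤ Real.log n ^ k := pow_le_pow_left₀ zero_le_one (sls_log_ge_one hn) k
  nlinarith

private lemma sls_g_mono (j k : ℕ) {a b : ℕ} (ha : 1 ≤ a) (hab : a ≤ b) :
    (a:ℝ) ^ j * Real.log a ^ k ≤ (b:ℝ) ^ j * Real.log b ^ k := by
  have ha' : (1:ℝ) ≤ (a:ℝ) := by exact_mod_cast ha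
  have hla : 0 ≤ Real.log a := Real.log_nonneg ha'
  have hlog : Real.log a ≤ Real.log b :=
    Real.log_le_log (by linarith) (by exact_mod_cast hab)
  exact mul_le_mul (pow_le_pow_left₀ (by positivity) (by exact_mod_cast hab) _)
    (pow_le_pow_left₀ hla hlog _) (pow_nonneg hla _) (by positivity)

/-- Extract a plain eventual bound from a big-O between nonnegative functions. -/
private lemma sls_obound {f g : ℕ → ℝ} (hf : ∀ n, 0 ≤ f n) (hg : ∀ n, 0 ≤ g n)
    (h : f =O[atTop] g) : ∃ c, 0 < c ∧ ∃ N, ∀ n, N ≤ n → f n ≤ c * g n := by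
  obtain ⟨c, hc, h⟩ := h.exists_pos
  obtain ⟨N, hN⟩ := eventually_atTop.mp h.bound
  refine ⟨c, hc, N, fun n hn => ?_⟩
  have := hN n hn
  rwa [Real.norm_of_nonneg (hf n), Real.norm_of_nonneg (hg n)] at this

/-- Build a big-O from a plain eventual bound between nonnegative functions. -/
private lemma sls_mkO {f g : ℕ → ℝ} (hf : ∀ n, 0 ≤ f n) (hg : ∀ n, 0 ≤ g n)
    (c : ℝ) (N : ℕ) (h : ∀ n, N ≤ n → f n ≤ c * g n) : f =O[atTop] g := by
  refine IsBigO.of_bound c ?_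
  filter_upwards [eventually_ge_atTop N] with n hn
  rw [Real.norm_of_nonneg (hf n), Real.norm_of_nonneg (hg n)]
  exact h n hn

/-- Closed form for the linear recursion. -/
private lemma sls_tr_formula (Tb Tr : ℕ → NNReal)
    (hTr : ∀ n, 2 ≤ n → Tr n = Tb n + Tr (n - 1)) :
    ∀ n, 1 ≤ n → Tr n = Tr 1 + ∑ m ∈ Finset.Icc 2 n, Tb m := by
  intro n hn
  induction n with
  | zero => omega
  | succ n ih =>
    rcases Nat.eq_zero_or_pos n with h | h
    · subst h; simp
    · have h2 : 2 ≤ n + 1 := by omega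
      rw [hTr (n + 1) h2]
      simp only [Nat.add_sub_cancel]
      rw [ih h, Finset.sum_Icc_succ_top h2]
      ring

/-- Linear bound for a halving recursion. -/
private lemma sls_tu_bound (Tu : ℕ → NNReal) (F : ℕ → ℝ)
    (hrec : ∀ n, 2 ≤ n → (Tu n : ℝ) = F n + Tu (n / 2))
    (φ : ℕ → ℝ) (hφ : ∀ n, 0 ≤ φ n) (B : ℝ) (hB : 0 ≤ B)
    (N : ℕ) (hN : 2 ≤ N)
    (hkey : ∀ n, N ≤ n → F n + B * φ (n / 2) ≤ B * φ n) :
    ∃ A, 0 ≤ A ∧ ∀ n, (Tu n : ℝ) ≤ A + B * φ n := by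
  refine ⟨∑ m ∈ Finset.range N, (Tu m : ℝ), by positivity, ?_⟩
  intro n
  induction n using Nat.strong_induction_on with
  | _ n ih =>
    by_cases h : n < N
    · have h1 : (Tu n : ℝ) ≤ ∑ m ∈ Finset.range N, (Tu m : ℝ) :=
        Finset.single_le_sum (fun i _ => (Tu i).coe_nonneg) (Finset.mem_range.2 h)
      have h2 : 0 ≤ B * φ n := mul_nonneg hB (hφ n)
      linarith
    · push_neg at h
      have h2 : 2 ≤ n := hN.trans h
      rw [hrec n h2]
      have hih := ih (n / 2) (Nat.div_lt_self (by omega) one_lt_two)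
      have hk := hkey n h
      linarith

/-- Sufficient and necessary condition for super-linear speedup:
T_u = o(T_r) iff the combined recursive step is asymptotically strictly
cheaper than the entire original recursion, T_c + T_d = o(n · T_b). -/
theorem superlinear_speedup_iff (j₁ k₁ j₂ k₂ : ℕ)
    (Tb Tc Td Tr Tu : ℕ → NNReal)
    (hTb : (fun n : ℕ => (Tb n : ℝ)) =Θ[atTop]
      fun n : ℕ => (n : ℝ) ^ j₁ * (Real.log n) ^ k₁)
    (hTcd : (fun n : ℕ => ((Tc n : ℝ) + (Td n : ℝ))) =Θ[atTop]
      fun n : ℕ => (n : ℝ) ^ j₂ * (Real.log n) ^ k₂)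
    (hTr : ∀ n, 2 ≤ n → Tr n = Tb n + Tr (n - 1))
    (hTu : ∀ n, 2 ≤ n → Tu n = Tc n + Td n + Tu (n / 2))
    (hTrb : ∃ C, ∀ n, n < 2 → Tr n ≤ C)
    (hTub : ∃ C, ∀ n, n < 2 → Tu n ≤ C) :
    ((fun n : ℕ => (Tu n : ℝ)) =o[atTop] fun n : ℕ => (Tr n : ℝ)) ↔
    ((fun n : ℕ => ((Tc n : ℝ) + (Td n : ℝ))) =o[atTop]
      fun n : ℕ => (n : ℝ) * (Tb n : ℝ)) := by
  classical
  set F : ℕ → ℝ := fun n : ℕ => (Tc n : ℝ) + (Td n : ℝ) with hF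
  set g₁ : ℕ → ℝ := fun n : ℕ => (n : ℝ) ^ j₁ * (Real.log n) ^ k₁ with hg₁
  set g₂ : ℕ → ℝ := fun n : ℕ => (n : ℝ) ^ j₂ * (Real.log n) ^ k₂ with hg₂
  set G : ℕ → ℝ := fun n : ℕ => (n : ℝ) * g₁ n with hG
  have hFnn : ∀ n, 0 ≤ F n := fun n => add_nonneg (Tc n).coe_nonneg (Td n).coe_nonneg
  have hGnn : ∀ n, 0 ≤ G n := fun n => mul_nonneg (Nat.cast_nonneg n) (sls_g_nonneg j₁ k₁ n)
  have hg1ge : ∀ n : ℕ, 3 ≤ n → 1 ≤ g₁ n := fun n hn => sls_g_ge_one j₁ k₁ hn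
  have hGgen : ∀ n : ℕ, 3 ≤ n → (n : ℝ) ≤ G n := fun n hn =>
    le_mul_of_one_le_right (Nat.cast_nonneg n) (hg1ge n hn)
  have hGge1 : ∀ n : ℕ, 3 ≤ n → 1 ≤ G n := fun n hn =>
    le_trans (by exact_mod_cast (by omega : 1 ≤ n)) (hGgen n hn)
  -- n * Tb n = Θ(G)
  have hnTb : (fun n : ℕ => (n : ℝ) * (Tb n : ℝ)) =Θ[atTop] G :=
    (isTheta_refl (fun n : ℕ => (n : ℝ)) atTop).mul hTb
  -- F = O(Tu)
  have hrecF : ∀ n, 2 ≤ n → (Tu n : ℝ) = F n + (Tu (n / 2) : ℝ) := by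
    intro n hn
    have := congrArg NNReal.toReal (hTu n hn)
    push_cast at this
    rw [this]
  have hFOTu : F =O[atTop] fun n : ℕ => (Tu n : ℝ) := by
    refine sls_mkO hFnn (fun n => (Tu n).coe_nonneg) 1 2 fun n hn => ?_
    rw [one_mul, hrecF n hn]
    have := (Tu (n / 2)).coe_nonneg
    linarith
  -- Tr = O(G)
  have hTrO : (fun n : ℕ => (Tr n : ℝ)) =O[atTop] G := by
    obtain ⟨c₁, hc₁, N₁, hN₁⟩ :=
      sls_obound (fun n => (Tb n).coe_nonneg) (sls_g_nonneg j₁ k₁) hTb.isBigO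
    set N := max N₁ 3 with hN
    set D := ∑ m ∈ Finset.range N, (Tb m : ℝ) with hD
    have hDnn : 0 ≤ D := Finset.sum_nonneg fun i _ => (Tb i).coe_nonneg
    have hpoint : ∀ m : ℕ, (Tb m : ℝ) ≤ D + c₁ * g₁ m := by
      intro m
      by_cases hm : m < N
      · have h1 : (Tb m : ℝ) ≤ D :=
          Finset.single_le_sum (fun i _ => (Tb i).coe_nonneg) (Finset.mem_range.2 hm)
        have h2 : 0 ≤ c₁ * g₁ m := mul_nonneg hc₁.le (sls_g_nonneg j₁ k₁ m)
        linarith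
      · push_neg at hm
        have h1 : (Tb m : ℝ) ≤ c₁ * g₁ m := hN₁ m (le_trans (le_max_left _ _) hm)
        linarith
    refine sls_mkO (fun n => (Tr n).coe_nonneg) hGnn ((Tr 1 : ℝ) + D + c₁) N fun n hn => ?_
    have h3 : 3 ≤ n := le_trans (le_max_right _ _) hn
    have hform := congrArg NNReal.toReal (sls_tr_formula Tb Tr hTr n (by omega))
    push_cast at hform
    have hsum : ∑ m ∈ Finset.Icc 2 n, (Tb m : ℝ) ≤ (n : ℝ) * (D + c₁ * g₁ n) := by
      have h1 : ∑ m ∈ Finset.Icc 2 n, (Tb m : ℝ) ≤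
          ∑ _m ∈ Finset.Icc 2 n, (D + c₁ * g₁ n) := by
        refine Finset.sum_le_sum fun m hm => ?_
        obtain ⟨hm2, hmn⟩ := Finset.mem_Icc.1 hm
        have hmono : g₁ m ≤ g₁ n := sls_g_mono j₁ k₁ (by omega : 1 ≤ m) hmn
        have h5 := mul_le_mul_of_nonneg_left hmono hc₁.le
        have h6 := hpoint m
        linarith
      have h2 : ∑ _m ∈ Finset.Icc 2 n, (D + c₁ * g₁ n) =
          ((n + 1 - 2 : ℕ) : ℝ) * (D + c₁ * g₁ n) := by
        rw [Finset.sum_const, Nat.card_Icc, nsmul_eq_mul]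
      have h3' : ((n + 1 - 2 : ℕ) : ℝ) ≤ (n : ℝ) := by
        exact_mod_cast (by omega : n + 1 - 2 ≤ n)
      have h4 : 0 ≤ D + c₁ * g₁ n :=
        add_nonneg hDnn (mul_nonneg hc₁.le (sls_g_nonneg j₁ k₁ n))
      calc ∑ m ∈ Finset.Icc 2 n, (Tb m : ℝ) ≤ ((n + 1 - 2 : ℕ) : ℝ) * (D + c₁ * g₁ n) := by
            rw [← h2]; exact h1
        _ ≤ (n : ℝ) * (D + c₁ * g₁ n) := mul_le_mul_of_nonneg_right h3' h4
    have hGn : (n : ℝ) ≤ G n := hGgen n h3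
    have hG1 : 1 ≤ G n := hGge1 n h3
    have hGeq : (n : ℝ) * (c₁ * g₁ n) = c₁ * G n := by rw [hG]; ring
    have hTr1 : (0:ℝ) ≤ (Tr 1 : ℝ) := (Tr 1).coe_nonneg
    calc (Tr n : ℝ) = (Tr 1 : ℝ) + ∑ m ∈ Finset.Icc 2 n, (Tb m : ℝ) := hform
      _ ≤ (Tr 1 : ℝ) + (n : ℝ) * (D + c₁ * g₁ n) := by linarith
      _ = (Tr 1 : ℝ) + (n : ℝ) * D + c₁ * G n := by rw [← hGeq]; ring
      _ ≤ (Tr 1 : ℝ) * G n + D * G n + c₁ * G n := by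
          have e1 : (Tr 1 : ℝ) ≤ (Tr 1 : ℝ) * G n := le_mul_of_one_le_right hTr1 hG1
          have e2 : (n : ℝ) * D ≤ D * G n := by
            rw [mul_comm]
            exact mul_le_mul_of_nonneg_left hGn hDnn
          linarith
      _ = ((Tr 1 : ℝ) + D + c₁) * G n := by ring
  -- G = O(Tr)
  have hGOTr : G =O[atTop] fun n : ℕ => (Tr n : ℝ) := by
    obtain ⟨c₂, hc₂, N₂, hN₂⟩ :=
      sls_obound (sls_g_nonneg j₁ k₁) (fun n => (Tb n).coe_nonneg) hTb.symm.isBigO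
    refine sls_mkO hGnn (fun n => (Tr n).coe_nonneg)
      (2 ^ (j₁ + k₁ + 1) * c₂) (max (2 * N₂) 4) fun n hn => ?_
    have h4 : 4 ≤ n := le_trans (le_max_right _ _) hn
    have hNn : 2 * N₂ ≤ n := le_trans (le_max_left _ _) hn
    set q := n / 2 with hq
    have hq2 : 2 ≤ q := by omega
    have hqN : N₂ ≤ q + 1 := by omega
    -- each term in the top half is at least g₁ (q+1) / c₂
    have helem : ∀ m ∈ Finset.Icc (q + 1) n, g₁ (q + 1) / c₂ ≤ (Tb m : ℝ) := by
      intro m hm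
      obtain ⟨hm1, hm2⟩ := Finset.mem_Icc.1 hm
      have h1 : g₁ m ≤ c₂ * (Tb m : ℝ) := hN₂ m (le_trans hqN hm1)
      have h2 : g₁ (q + 1) ≤ g₁ m := sls_g_mono j₁ k₁ (by omega) hm1
      rw [div_le_iff₀ hc₂]
      calc g₁ (q + 1) ≤ g₁ m := h2
        _ ≤ c₂ * (Tb m : ℝ) := h1
        _ = (Tb m : ℝ) * c₂ := mul_comm _ _
    have hsum : ((n - q : ℕ) : ℝ) * (g₁ (q + 1) / c₂) ≤
        ∑ m ∈ Finset.Icc (q + 1) n, (Tb m : ℝ) := by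
      have := Finset.card_nsmul_le_sum (Finset.Icc (q + 1) n)
        (fun m => (Tb m : ℝ)) (g₁ (q + 1) / c₂) helem
      rwa [Nat.card_Icc, show n + 1 - (q + 1) = n - q by omega, nsmul_eq_mul] at this
    have hsub : ∑ m ∈ Finset.Icc (q + 1) n, (Tb m : ℝ) ≤
        ∑ m ∈ Finset.Icc 2 n, (Tb m : ℝ) :=
      Finset.sum_le_sum_of_subset_of_nonneg
        (Finset.Icc_subset_Icc_left (by omega)) (fun i _ _ => (Tb i).coe_nonneg)
    have hform := congrArg NNReal.toReal (sls_tr_formula Tb Tr hTr n (by omega))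
    push_cast at hform
    have hTrge : ((n - q : ℕ) : ℝ) * (g₁ (q + 1) / c₂) ≤ (Tr n : ℝ) := by
      have := (Tr 1).coe_nonneg
      rw [hform]; linarith
    -- g₁ n ≤ 2 ^ (j₁ + k₁) * g₁ (q + 1)
    have hcast1 : (n : ℝ) ≤ 2 * ((q + 1 : ℕ) : ℝ) := by
      have : n ≤ 2 * (q + 1) := by omega
      exact_mod_cast this
    have hpowle : (n : ℝ) ^ j₁ ≤ 2 ^ j₁ * ((q + 1 : ℕ) : ℝ) ^ j₁ := by
      calc (n : ℝ) ^ j₁ ≤ (2 * ((q + 1 : ℕ) : ℝ)) ^ j₁ :=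
            pow_le_pow_left₀ (Nat.cast_nonneg n) hcast1 j₁
        _ = 2 ^ j₁ * ((q + 1 : ℕ) : ℝ) ^ j₁ := mul_pow _ _ _
    have hlogle : Real.log n ≤ 2 * Real.log ((q + 1 : ℕ) : ℝ) := by
      have hsqR : (n : ℝ) ≤ ((q + 1 : ℕ) : ℝ) ^ 2 := by
        have hq2R : (2:ℝ) ≤ (q : ℝ) := by exact_mod_cast hq2
        have hn21 : (n : ℝ) ≤ 2 * (q : ℝ) + 1 := by
          exact_mod_cast (by omega : n ≤ 2 * q + 1)
        push_cast
        nlinarith [sq_nonneg ((q : ℝ))]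
      have hnpos : (0:ℝ) < (n : ℝ) := by exact_mod_cast (by omega : 0 < n)
      have h1 : Real.log n ≤ Real.log (((q + 1 : ℕ) : ℝ) ^ 2) :=
        Real.log_le_log hnpos hsqR
      rw [Real.log_pow] at h1
      push_cast at h1 ⊢
      linarith
    have hlognn : 0 ≤ Real.log n := Real.log_nonneg (by exact_mod_cast (by omega : 1 ≤ n))
    have hlogpow : Real.log n ^ k₁ ≤ 2 ^ k₁ * Real.log ((q + 1 : ℕ) : ℝ) ^ k₁ := by
      calc Real.log n ^ k₁ ≤ (2 * Real.log ((q + 1 : ℕ) : ℝ)) ^ k₁ :=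
            pow_le_pow_left₀ hlognn hlogle k₁
        _ = 2 ^ k₁ * Real.log ((q + 1 : ℕ) : ℝ) ^ k₁ := mul_pow _ _ _
    have hlogq : 0 ≤ Real.log ((q + 1 : ℕ) : ℝ) :=
      Real.log_nonneg (by exact_mod_cast (by omega : 1 ≤ q + 1))
    have hg1le : g₁ n ≤ 2 ^ (j₁ + k₁) * g₁ (q + 1) := by
      rw [hg₁]
      calc (n : ℝ) ^ j₁ * Real.log n ^ k₁
          ≤ (2 ^ j₁ * ((q + 1 : ℕ) : ℝ) ^ j₁) * (2 ^ k₁ * Real.log ((q + 1 : ℕ) : ℝ) ^ k₁) :=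
            mul_le_mul hpowle hlogpow (pow_nonneg hlognn _) (by positivity)
        _ = 2 ^ (j₁ + k₁) * (((q + 1 : ℕ) : ℝ) ^ j₁ * Real.log ((q + 1 : ℕ) : ℝ) ^ k₁) := by
            rw [pow_add]; ring
    have hcast2 : (n : ℝ) ≤ 2 * ((n - q : ℕ) : ℝ) := by
      have : n ≤ 2 * (n - q) := by omega
      exact_mod_cast this
    have hg1qnn : 0 ≤ g₁ (q + 1) := sls_g_nonneg j₁ k₁ (q + 1)
    have hnqnn : (0:ℝ) ≤ ((n - q : ℕ) : ℝ) := Nat.cast_nonneg _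
    calc G n = (n : ℝ) * g₁ n := rfl
      _ ≤ (2 * ((n - q : ℕ) : ℝ)) * (2 ^ (j₁ + k₁) * g₁ (q + 1)) := by
          refine mul_le_mul hcast2 hg1le (sls_g_nonneg j₁ k₁ n) (by positivity)
      _ = (2 ^ (j₁ + k₁ + 1) * c₂) * (((n - q : ℕ) : ℝ) * (g₁ (q + 1) / c₂)) := by
          field_simp
          ring
      _ ≤ (2 ^ (j₁ + k₁ + 1) * c₂) * (Tr n : ℝ) := by
          refine mul_le_mul_of_nonneg_left hTrge (by positivity)
  have hTrTheta : (fun n : ℕ => (Tr n : ℝ)) =Θ[atTop] G := ⟨hTrO, hGOTr⟩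
  -- powers of log are o(G)
  have hlog_o : ∀ K : ℕ, (fun n : ℕ => Real.log n ^ K) =o[atTop] G := by
    intro K
    have h1 : (fun n : ℕ => Real.log n ^ K) =o[atTop] fun n : ℕ => (n : ℝ) := by
      have h0 : Tendsto (fun n : ℕ => (n : ℝ)) atTop atTop :=
        tendsto_natCast_atTop_atTop
      exact (Real.isLittleO_pow_log_id_atTop (n := K)).comp_tendsto h0
    refine h1.trans_isBigO (sls_mkO (fun n => Nat.cast_nonneg n) hGnn 1 3 fun n hn => ?_)
    rw [one_mul]
    exact hGgen n hn
  constructor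
  · -- forward direction
    intro h
    have h2 : F =o[atTop] fun n : ℕ => (Tr n : ℝ) := hFOTu.trans_isLittleO h
    exact h2.trans_isTheta (hTrTheta.trans hnTb.symm)
  · -- backward direction
    intro h
    obtain ⟨c₃, hc₃, N₃, hN₃⟩ := sls_obound hFnn (sls_g_nonneg j₂ k₂) hTcd.isBigO
    rcases Nat.eq_zero_or_pos j₂ with hj | hj
    · -- j₂ = 0 : Tu = O(log^(k₂+1)) = o(G) = Θ(Tr)
      have hlpnn : ∀ (m K : ℕ), 0 ≤ Real.log m ^ K := by
        intro m K
        rcases Nat.eq_zero_or_pos m with hm | hm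
        · subst hm; simp only [Nat.cast_zero, Real.log_zero]
          exact pow_nonneg le_rfl _
        · exact pow_nonneg (Real.log_nonneg (by exact_mod_cast hm)) _
      set φ : ℕ → ℝ := fun n => ((Nat.log 2 n : ℕ) : ℝ) * Real.log n ^ k₂ with hφ
      have hφnn : ∀ n, 0 ≤ φ n := fun n => mul_nonneg (Nat.cast_nonneg _) (hlpnn n k₂)
      have hkey : ∀ n, max N₃ 2 ≤ n → F n + c₃ * φ (n / 2) ≤ c₃ * φ n := by
        intro n hn
        have h2n : 2 ≤ n := le_trans (le_max_right _ _) hn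
        have hL1 : 1 ≤ Nat.log 2 n := Nat.log_pos one_lt_two h2n
        have hLq : Nat.log 2 (n / 2) = Nat.log 2 n - 1 := Nat.log_div_base 2 n
        have hcastL : ((Nat.log 2 (n / 2) : ℕ) : ℝ) = ((Nat.log 2 n : ℕ) : ℝ) - 1 := by
          rw [hLq, Nat.cast_sub hL1, Nat.cast_one]
        have hlogq : Real.log ((n / 2 : ℕ) : ℝ) ^ k₂ ≤ Real.log n ^ k₂ := by
          have h1 : 1 ≤ n / 2 := by omega
          have := sls_g_mono 0 k₂ h1 (Nat.div_le_self n 2)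
          simpa using this
        have hFle : F n ≤ c₃ * Real.log n ^ k₂ := by
          have h0 : F n ≤ c₃ * g₂ n := hN₃ n (le_trans (le_max_left _ _) hn)
          rw [hg₂] at h0
          simpa [hj] using h0
        have hLnn : (0:ℝ) ≤ ((Nat.log 2 n : ℕ) : ℝ) - 1 := by
          have : (1:ℝ) ≤ ((Nat.log 2 n : ℕ) : ℝ) := by exact_mod_cast hL1
          linarith
        have e2 : φ (n / 2) ≤ (((Nat.log 2 n : ℕ) : ℝ) - 1) * Real.log n ^ k₂ := by
          rw [hφ]
          dsimp only
          rw [hcastL]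
          exact mul_le_mul_of_nonneg_left hlogq hLnn
        calc F n + c₃ * φ (n / 2)
            ≤ c₃ * Real.log n ^ k₂ +
              c₃ * ((((Nat.log 2 n : ℕ) : ℝ) - 1) * Real.log n ^ k₂) :=
              add_le_add hFle (mul_le_mul_of_nonneg_left e2 hc₃.le)
          _ = c₃ * φ n := by rw [hφ]; ring
      obtain ⟨A, hA, hbound⟩ := sls_tu_bound Tu F hrecF φ hφnn c₃ hc₃.le
        (max N₃ 2) (le_max_right _ _) hkey
      have hTuO : (fun n : ℕ => (Tu n : ℝ)) =O[atTop]
          fun n : ℕ => Real.log n ^ (k₂ + 1) := by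
        refine sls_mkO (fun n => (Tu n).coe_nonneg) (fun n => hlpnn n (k₂ + 1))
          (A + 2 * c₃) 3 fun n hn => ?_
        have hlog1 : 1 ≤ Real.log n := sls_log_ge_one hn
        have hLle : ((Nat.log 2 n : ℕ) : ℝ) ≤ 2 * Real.log n := by
          have hp : ((2 ^ Nat.log 2 n : ℕ) : ℝ) ≤ (n : ℝ) := by
            exact_mod_cast Nat.pow_log_le_self 2 (by omega : n ≠ 0)
          have h1 : Real.log ((2 ^ Nat.log 2 n : ℕ) : ℝ) ≤ Real.log n :=
            Real.log_le_log (by positivity) hp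
          have h2 : Real.log ((2 ^ Nat.log 2 n : ℕ) : ℝ) =
              (Nat.log 2 n : ℝ) * Real.log 2 := by
            push_cast
            exact Real.log_pow _ _
          have h3 : (0.6931471803 : ℝ) < Real.log 2 := Real.log_two_gt_d9
          have h4 : (0:ℝ) ≤ (Nat.log 2 n : ℝ) := Nat.cast_nonneg _
          nlinarith
        have hbn := hbound n
        have hlpk : 0 ≤ Real.log n ^ k₂ := hlpnn n k₂
        have hstep : φ n ≤ 2 * Real.log n * Real.log n ^ k₂ :=
          mul_le_mul_of_nonneg_right hLle hlpk
        have hpow : Real.log n ^ (k₂ + 1) = Real.log n * Real.log n ^ k₂ := by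
          rw [pow_succ]; ring
        have hp1 : 1 ≤ Real.log n ^ (k₂ + 1) := by
          calc (1:ℝ) = 1 ^ (k₂ + 1) := (one_pow _).symm
            _ ≤ Real.log n ^ (k₂ + 1) := pow_le_pow_left₀ zero_le_one hlog1 _
        have hAG : A ≤ A * Real.log n ^ (k₂ + 1) := le_mul_of_one_le_right hA hp1
        have hc3φ : c₃ * φ n ≤ 2 * c₃ * Real.log n ^ (k₂ + 1) := by
          rw [hpow]
          calc c₃ * φ n ≤ c₃ * (2 * Real.log n * Real.log n ^ k₂) :=
                mul_le_mul_of_nonneg_left hstep hc₃.le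
            _ = 2 * c₃ * (Real.log n * Real.log n ^ k₂) := by ring
        calc (Tu n : ℝ) ≤ A + c₃ * φ n := hbn
          _ ≤ A * Real.log n ^ (k₂ + 1) + 2 * c₃ * Real.log n ^ (k₂ + 1) := by linarith
          _ = (A + 2 * c₃) * Real.log n ^ (k₂ + 1) := by ring
      have hTuo : (fun n : ℕ => (Tu n : ℝ)) =o[atTop] G :=
        hTuO.trans_isLittleO (hlog_o (k₂ + 1))
      exact hTuo.trans_isBigO hGOTr
    · -- j₂ ≥ 1 : Tu = O(g₂) = Θ(F) = o(n Tb) = Θ(Tr)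
      have hkey : ∀ n, max N₃ 2 ≤ n → F n + (2 * c₃) * g₂ (n / 2) ≤ (2 * c₃) * g₂ n := by
        intro n hn
        have h2n : 2 ≤ n := le_trans (le_max_right _ _) hn
        have hFle : F n ≤ c₃ * g₂ n := hN₃ n (le_trans (le_max_left _ _) hn)
        have hhalf : g₂ (n / 2) ≤ g₂ n / 2 := by
          set q := n / 2 with hq
          have hq1 : 1 ≤ q := by omega
          have hlogq : Real.log ((q : ℕ) : ℝ) ^ k₂ ≤ Real.log n ^ k₂ := by
            have := sls_g_mono 0 k₂ hq1 (Nat.div_le_self n 2)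
            simpa using this
          have hqle : ((q : ℕ) : ℝ) ≤ (n : ℝ) / 2 := Nat.cast_div_le
          have hqpow : ((q : ℕ) : ℝ) ^ j₂ ≤ ((n : ℝ) / 2) ^ j₂ :=
            pow_le_pow_left₀ (Nat.cast_nonneg q) hqle j₂
          have h2j : ((n : ℝ) / 2) ^ j₂ ≤ (n : ℝ) ^ j₂ / 2 := by
            rw [div_pow]
            refine div_le_div_of_nonneg_left (by positivity) (by norm_num) ?_
            calc (2:ℝ) = 2 ^ 1 := (pow_one 2).symm
              _ ≤ 2 ^ j₂ := pow_le_pow_right₀ (by norm_num) hj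
          have hlognn : 0 ≤ Real.log ((q : ℕ) : ℝ) ^ k₂ := by
            exact pow_nonneg (Real.log_nonneg (by exact_mod_cast hq1)) _
          rw [hg₂]
          dsimp only
          calc ((q : ℕ) : ℝ) ^ j₂ * Real.log ((q : ℕ) : ℝ) ^ k₂
              ≤ ((n : ℝ) ^ j₂ / 2) * Real.log n ^ k₂ := by
                refine mul_le_mul (le_trans hqpow h2j) hlogq hlognn (by positivity)
            _ = (n : ℝ) ^ j₂ * Real.log n ^ k₂ / 2 := by ring
        have h7 := mul_le_mul_of_nonneg_left hhalf (by positivity : (0:ℝ) ≤ 2 * c₃)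
        calc F n + 2 * c₃ * g₂ (n / 2) ≤ c₃ * g₂ n + 2 * c₃ * (g₂ n / 2) :=
              add_le_add hFle h7
          _ = 2 * c₃ * g₂ n := by ring
      obtain ⟨A, hA, hbound⟩ := sls_tu_bound Tu F hrecF g₂ (sls_g_nonneg j₂ k₂)
        (2 * c₃) (by positivity) (max N₃ 2) (le_max_right _ _) hkey
      have hTuO : (fun n : ℕ => (Tu n : ℝ)) =O[atTop] g₂ := by
        refine sls_mkO (fun n => (Tu n).coe_nonneg) (sls_g_nonneg j₂ k₂)
          (A + 2 * c₃) 3 fun n hn => ?_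
        have h1 : 1 ≤ g₂ n := sls_g_ge_one j₂ k₂ hn
        have hbn := hbound n
        have hAg : A ≤ A * g₂ n := le_mul_of_one_le_right hA h1
        nlinarith
      have h1 : (fun n : ℕ => (Tu n : ℝ)) =O[atTop] F := hTuO.trans_isTheta hTcd.symm
      have h2 : (fun n : ℕ => (Tu n : ℝ)) =o[atTop]
          fun n : ℕ => (n : ℝ) * (Tb n : ℝ) := h1.trans_isLittleO h
      exact h2.trans_isTheta (hnTb.trans hTrTheta.symm)
end
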